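/- Let φ_t be a flow on a compact manifold N with a continuous cone field C(x) = C(x, E(x), δ) and let Θ(v, E) := ‖Pr_E v‖² / ‖v‖². Suppose there exists a > 0 such that for every x ∈ N and every unit vector v with Θ(v, E(x)) = c (the cone boundary), d/dt|_{t=0} Θ(dφ_t v, E(φ_t x)) ≥ a. Then the cone field is properly invariant: for all t > 0, dφ_t(C(x)) is contained in the interior of C(φ_t x). -/

import Mathlib

/-- Key real-analysis lemma: if `f 0 ≥ c` and `deriv f ≥ a > 0` wherever `f = c`,
then `f t > c` for all `t > 0`. -/
lemma stmt_12_aux {f : ℝ → ℝ} {c a : ℝ} (ha : 0 < a) (hf : Differentiable ℝ f)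
    (h0 : c ≤ f 0) (hd : ∀ s, f s = c → a ≤ deriv f s) :
    ∀ t, 0 < t → c < f t := by
  have hge : ∀ t, 0 ≤ t → c ≤ f t := by
    intro t ht
    have key := image_le_of_deriv_right_lt_deriv_boundary'
      (f := fun s => -f s) (f' := fun s => -deriv f s) (a := 0) (b := t)
      (hf.neg.continuous.continuousOn)
      (fun x _ => ((hf x).hasDerivAt.neg).hasDerivWithinAt)
      (B := fun _ => -c) (B' := fun _ => 0) (by simpa using h0)
      continuousOn_const (fun x _ => (hasDerivWithinAt_const _ _ _))
      (by
        intro x _ hx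
        have hfx : f x = c := by simpa using neg_inj.mp hx
        have := hd x hfx
        show -deriv f x < 0
        linarith)
      ⟨ht, le_rfl⟩
    simpa using key
  intro t ht
  have h1 := hge t ht.le
  rcases lt_or_eq_of_le h1 with h | h
  · exact h
  · exfalso
    have hda : a ≤ deriv f t := hd t h.symm
    have hderiv : HasDerivAt f (deriv f t) t := (hf t).hasDerivAt
    have hslope : Filter.Tendsto (slope f t) (nhdsWithin t {t}ᶜ) (nhds (deriv f t)) :=
      hasDerivAt_iff_tendsto_slope.mp hderiv
    have hslope' : Filter.Tendsto (slope f t) (nhdsWithin t (Set.Iio t)) (nhds (deriv f t)) :=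
      hslope.mono_left (nhdsWithin_mono _ (fun s hs => ne_of_lt hs))
    have hpos : ∀ᶠ s in nhdsWithin t (Set.Iio t), 0 < slope f t s :=
      hslope'.eventually (eventually_gt_nhds (lt_of_lt_of_le ha hda))
    have hmem : ∀ᶠ s in nhdsWithin t (Set.Iio t), s ∈ Set.Ioo 0 t :=
      Ioo_mem_nhdsLT ht
    obtain ⟨s, hs1, hs2⟩ := (hpos.and hmem).exists
    have hst : s - t < 0 := by linarith [hs2.2]
    have : f s - f t < 0 := by
      by_contra hcon
      push_neg at hcon
      have : slope f t s ≤ 0 := by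
        rw [slope_def_field]
        exact div_nonpos_of_nonneg_of_nonpos (by linarith) hst.le
      linarith
    have : f s < c := by linarith
    linarith [hge s hs2.1.le]

/-- proper invariance of a cone field from a uniform derivative bound on the
cone boundary, for a flow `φ` on a compact space with derivative cocycle `D` and projection
field `P`, with `Θ(x,v) = ‖P x v‖²/‖v‖²` and cone `{Θ ≥ c}`. -/
theorem stmt_12 {M : Type*} [TopologicalSpace M] [CompactSpace M]
    {V : Type*} [NormedAddCommGroup V] [NormedSpace ℝ V]
    (φ : ℝ → M → M) (hφ0 : ∀ x, φ 0 x = x) (hφflow : ∀ s t x, φ (s + t) x = φ s (φ t x))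
    (D : ℝ → M → (V →L[ℝ] V)) (hD0 : ∀ x, D 0 x = ContinuousLinearMap.id ℝ V)
    (hDcoc : ∀ s t x, D (s + t) x = (D s (φ t x)).comp (D t x))
    (hDinj : ∀ t x v, v ≠ 0 → D t x v ≠ 0)
    (P : M → (V →L[ℝ] V))
    (Θ : M → V → ℝ) (hΘ : ∀ x v, Θ x v = ‖P x v‖^2 / ‖v‖^2)
    (c a : ℝ) (hc : c ∈ Set.Ioo (1:ℝ) 2) (ha : 0 < a)
    (hdiff : ∀ x v, v ≠ 0 → Differentiable ℝ (fun t => Θ (φ t x) (D t x v)))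
    (hder : ∀ x v, ‖v‖ = 1 → Θ x v = c →
      a ≤ deriv (fun t => Θ (φ t x) (D t x v)) 0) :
    ∀ x v, v ≠ 0 → c ≤ Θ x v → ∀ t, 0 < t → c < Θ (φ t x) (D t x v) := by
  -- scale invariance of Θ
  have hscale : ∀ (y : M) (r : ℝ) (w : V), r ≠ 0 → Θ y (r • w) = Θ y w := by
    intro y r w hr
    rw [hΘ, hΘ, map_smul, norm_smul, norm_smul, mul_pow, mul_pow,
      mul_div_mul_left _ _ (pow_ne_zero 2 (by simpa using hr))]
  intro x v hv hcv
  set f : ℝ → ℝ := fun t => Θ (φ t x) (D t x v) with hfdef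
  have hf : Differentiable ℝ f := hdiff x v hv
  have h0 : c ≤ f 0 := by
    simp only [hfdef, hφ0, hD0]
    simpa using hcv
  -- derivative bound on the level set
  have hd : ∀ s, f s = c → a ≤ deriv f s := by
    intro s hs
    set x' := φ s x with hx'
    set w := D s x v with hwdef
    have hw : w ≠ 0 := hDinj s x v hv
    have hwn : ‖w‖ ≠ 0 := norm_ne_zero_iff.mpr hw
    set u : V := ‖w‖⁻¹ • w with hu
    have hun : ‖u‖ = 1 := norm_smul_inv_norm hw
    have hΘu : Θ x' u = c := by
      rw [hu, hscale x' _ w (inv_ne_zero hwn)]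
      exact hs
    have hkey := hder x' u hun hΘu
    have heq : (fun r => Θ (φ r x') (D r x' u)) = fun r => f (r + s) := by
      funext r
      have h1 : φ (r + s) x = φ r x' := hφflow r s x
      have h2 : D (r + s) x v = D r x' w := by
        rw [hDcoc r s x]; rfl
      have h3 : D r x' u = ‖w‖⁻¹ • D r x' w := by
        rw [hu, map_smul]
      simp only [hfdef, h1, h2, h3, hscale (φ r x') _ _ (inv_ne_zero hwn)]
    rw [heq] at hkey
    have : deriv (fun r => f (r + s)) 0 = deriv f (0 + s) := deriv_comp_add_const f s 0
    rw [this, zero_add] at hkey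
    exact hkey
  exact fun t ht => stmt_12_aux ha hf h0 hd t ht
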